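/- Let R be an associative unital ring, let p ∈ R satisfy p² = p, and let a, b, c ∈ R satisfy a + b + c = 1. Then [a,b,c]_p = (pap)(pbp) − (pbp)(pap). -/
import Mathlib


/-- The antisymmetrized triple product `[a,b,c]_p` from the partition–idempotent pairing. -/
def tripleBracket {R : Type*} [Ring R] (a b c p : R) : R :=
  a*p*b*p*c*p + b*p*c*p*a*p + c*p*a*p*b*p - c*p*b*p*a*p - b*p*a*p*c*p - a*p*c*p*b*p

/-- If `p` is idempotent and `a + b + c = 1`, then
`[a,b,c]_p = (pap)(pbp) − (pbp)(pap)`. -/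
theorem tripleBracket_eq_commutator {R : Type*} [Ring R] (p a b c : R)
    (hp : p * p = p) (habc : a + b + c = 1) :
    tripleBracket a b c p = (p*a*p) * (p*b*p) - (p*b*p) * (p*a*p) := by
  have hc : c = 1 - a - b := by rw [← habc]; abel
  subst hc
  have hp' : ∀ x : R, p * (p * x) = p * x := fun x => by rw [← mul_assoc, hp]
  simp only [tripleBracket, mul_sub, sub_mul, mul_one, one_mul, mul_assoc, hp, hp']
  abel
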